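/- Let s = l̂_1 + l̂_2 + l̂_3 + ... be a degree −1 coderivation on the graded symmetric coalgebra ΛsX_* with l̂_k of resolution degree k−2, satisfying the relations I_l = Σ_{i+j=l+1} l̂_i l̂_j = 0 for all l ≤ k where k ≥ 3. Then the graded Jacobi identity [s,[s,s]] = 0 at resolution degree k implies [l̂_1, l̂_2 l̂_k + l̂_3 l̂_{k-1} + ... + l̂_k l̂_2] = 0, i.e., the obstruction to extending the structure one step further is a cocycle for the adjoint action of l̂_1 on coderivations. -/
import Mathlib


lemma jacobi_swap (A : Type) [Ring A] (L : ℕ → A) (n : ℕ) :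
    ∑ i ∈ Finset.Icc 1 (n+1), ∑ m ∈ Finset.Icc 1 (n+2-i),
        L i * (L m * L (n+3-i-m)) =
    ∑ i ∈ Finset.Icc 1 (n+1), ∑ m ∈ Finset.Icc 1 (n+2-i),
        L m * L (n+3-i-m) * L i := by
  rw [Finset.sum_sigma', Finset.sum_sigma']
  refine Finset.sum_nbij' (fun p => ⟨n+3-p.1-p.2, p.1⟩)
    (fun p => ⟨p.2, n+3-p.1-p.2⟩) ?_ ?_ ?_ ?_ ?_
  · rintro ⟨i, m⟩ h
    simp only [Finset.mem_sigma, Finset.mem_Icc] at h ⊢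
    omega
  · rintro ⟨i, m⟩ h
    simp only [Finset.mem_sigma, Finset.mem_Icc] at h ⊢
    omega
  · rintro ⟨i, m⟩ h
    simp only [Finset.mem_sigma, Finset.mem_Icc] at h
    dsimp only
    have h1 : n+3-(n+3-i-m)-i = m := by omega
    rw [h1]
  · rintro ⟨i, m⟩ h
    simp only [Finset.mem_sigma, Finset.mem_Icc] at h
    dsimp only
    have h1 : n+3-m-(n+3-i-m) = i := by omega
    rw [h1]
  · rintro ⟨i, m⟩ h
    simp only [Finset.mem_sigma, Finset.mem_Icc] at h
    dsimp only
    have h1 : n+3-(n+3-i-m)-i = m := by omega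
    rw [h1, mul_assoc]


/-!
STATEMENT 15.  The coderivations `l̂k` on the graded symmetric coalgebra
`ΛsX` live in the associative algebra `A` of endomorphisms of `ΛsX`; `L k`
stands for `l̂k`, a degree `-1` (odd) coderivation of resolution degree
`k - 2`.  `I_l = Σ_{i+j=l+1} l̂i l̂j` is the resolution-degree component of
`(1/2)[s,s]` for `s = l̂1 + l̂2 + …`.  If `I_l = 0` for all `1 ≤ l ≤ k`
(with `k ≥ 3`), then the graded Jacobi identity `[s,[s,s]] = 0` in resolution
degree `k` forces the obstruction `S = l̂2 l̂k + l̂3 l̂_{k-1} + … + l̂k l̂2`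
to be a cocycle for the adjoint action of `l̂1`:
`[l̂1, S] = l̂1 S - S l̂1 = 0` (`S` is even, `l̂1` is odd).
-/
theorem stmt15
    (A : Type) [Ring A] (L : ℕ → A) (k : ℕ) (hk : 3 ≤ k)
    (hI : ∀ l : ℕ, 1 ≤ l → l ≤ k →
      ∑ i ∈ Finset.Icc 1 l, L i * L (l + 1 - i) = 0) :
    L 1 * (∑ i ∈ Finset.Icc 2 k, L i * L (k + 2 - i))
      - (∑ i ∈ Finset.Icc 2 k, L i * L (k + 2 - i)) * L 1 = 0 := by
  set S := ∑ i ∈ Finset.Icc 2 k, L i * L (k + 2 - i) with hSdef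
  set J : ℕ → A := fun l => ∑ i ∈ Finset.Icc 1 l, L i * L (l + 1 - i) with hJdef
  have hJ0 : ∀ l, 1 ≤ l → l ≤ k → J l = 0 := hI
  have hsq : L 1 * L 1 = 0 := by
    have := hI 1 le_rfl (by omega)
    simpa using this
  -- Jacobi identity in resolution degree k:
  have jac : ∑ i ∈ Finset.Icc 1 (k+1),
      (L i * J (k+2-i) - J (k+2-i) * L i) = 0 := by
    have expand : ∀ i ∈ Finset.Icc 1 (k+1),
        L i * J (k+2-i) - J (k+2-i) * L i =
        (∑ m ∈ Finset.Icc 1 (k+2-i), L i * (L m * L (k+3-i-m)))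
        - ∑ m ∈ Finset.Icc 1 (k+2-i), L m * L (k+3-i-m) * L i := by
      intro i hi
      simp only [Finset.mem_Icc] at hi
      have harg : ∀ m ∈ Finset.Icc 1 (k+2-i), k+2-i+1-m = k+3-i-m := by
        intro m hm; simp only [Finset.mem_Icc] at hm; omega
      rw [hJdef]
      simp only
      rw [Finset.mul_sum, Finset.sum_mul]
      congr 1
      · exact Finset.sum_congr rfl (fun m hm => by rw [harg m hm])
      · exact Finset.sum_congr rfl (fun m hm => by rw [harg m hm])
    rw [Finset.sum_congr rfl expand, Finset.sum_sub_distrib,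
        jacobi_swap A L k, sub_self]
  -- all terms with i ≥ 2 vanish, leaving the i = 1 term
  have key : L 1 * J (k+1) - J (k+1) * L 1 = 0 := by
    have hvanish : ∀ i ∈ Finset.Icc 2 (k+1),
        L i * J (k+2-i) - J (k+2-i) * L i = 0 := by
      intro i hi
      simp only [Finset.mem_Icc] at hi
      rw [hJ0 (k+2-i) (by omega) (by omega)]
      simp
    have split : Finset.Icc 1 (k+1) = insert 1 (Finset.Icc 2 (k+1)) := by
      ext x; simp only [Finset.mem_Icc, Finset.mem_insert]; omega
    rw [split, Finset.sum_insert (by simp), Finset.sum_eq_zero hvanish,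
        add_zero] at jac
    simpa using jac
  -- decompose J (k+1)
  have decomp : J (k+1) = L 1 * L (k+1) + S + L (k+1) * L 1 := by
    rw [hJdef, hSdef]
    simp only
    have split : Finset.Icc 1 (k+1) = insert 1 (insert (k+1) (Finset.Icc 2 k)) := by
      ext x
      simp only [Finset.mem_Icc, Finset.mem_insert]
      omega
    rw [split, Finset.sum_insert, Finset.sum_insert]
    · have e1 : k+1+1-1 = k+1 := by omega
      have e2 : k+1+1-(k+1) = 1 := by omega
      rw [e1, e2]
      have harg : ∀ i ∈ Finset.Icc 2 k, L i * L (k+1+1-i) = L i * L (k+2-i) := by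
        intro i hi; simp only [Finset.mem_Icc] at hi
        have : k+1+1-i = k+2-i := by omega
        rw [this]
      rw [Finset.sum_congr rfl harg]
      abel
    · simp only [Finset.mem_Icc]; omega
    · simp only [Finset.mem_insert, Finset.mem_Icc]; omega
  rw [decomp] at key
  have e : L 1 * S - S * L 1 =
      (L 1 * (L 1 * L (k+1) + S + L (k+1) * L 1)
        - (L 1 * L (k+1) + S + L (k+1) * L 1) * L 1)
      - (L 1 * L 1) * L (k+1) + L (k+1) * (L 1 * L 1) := by
    noncomm_ring
  rw [e, key, hsq]
  noncomm_ring
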